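/- Let A be a nonempty finite set, let B_A be either the set of all reflexive binary relations on A or the set of all irreflexive binary relations on A, and let X' = (B_A, ∪, ∩) be the bounded distributive lattice they form under union and intersection, with median μ'(R1,R2,R3) = (R1∪R2)∩(R2∪R3)∩(R3∪R1) = (R1∩R2)∪(R2∩R3)∪(R3∩R1). For an aggregation rule f : B_A^N → B_A, the following are equivalent: (i) f is strategy-proof on D^N for every rich domain D of locally unimodal preorders w.r.t. the median betweenness B_{μ'}; (ii) f is B_{μ'}-monotonic; (iii) f is monotonically M_{X'}-independent; (iv) f is monotonically J_{X'}-independent; (v) f is monotonically IIA; (vi) there exist an order filter 𝓕 of (P(N),⊆) and relations R_S ∈ B_A (S ∈ 𝓕) such that f(R_N) = ⋂_{S∈𝓕} ((⋃_{i∈S} R_i) ∪ R_S) for all profiles R_N; (vii) there exist an order filter 𝓕 of (P(N),⊆) and relations R_S ∈ B_A (S ∈ 𝓕) such that f(R_N) = ⋃_{S∈𝓕} ((⋂_{i∈S} R_i) ∩ R_S) for all profiles R_N. -/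

import Mathlib

/-- A preorder (reflexive transitive relation) on `X`, used as an agent's
preference over outcomes. -/
structure Pref (X : Type*) where
  rel : X → X → Prop
  refl : ∀ x, rel x x
  trans : ∀ x y z, rel x y → rel y z → rel x z

namespace Pref

/-- Strict (asymmetric) part of a preference preorder. -/
def strict {X : Type*} (R : Pref X) (x y : X) : Prop := R.rel x y ∧ ¬ R.rel y x

/-- `t` is the unique maximum of the preorder `R`. -/
def IsTop {X : Type*} (R : Pref X) (t : X) : Prop :=
  (∀ y, R.rel t y) ∧ ∀ t', (∀ y, R.rel t' y) → t' = t

end Pref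

/-- The interval `I^μ(x,y) = {z : z = μ(x,y,z)}` induced by a ternary median operation. -/
def medInterval {X : Type*} (μ : X → X → X → X) (x y : X) : Set X :=
  {z | μ x y z = z}

/-- A preorder on `X` is locally unimodal (single-peaked) w.r.t. the betweenness induced
by the median `μ`: it has a unique maximum `t`, and any outcome lying strictly between
`t` and another outcome `y` is not worse than `y`. -/
def LocallyUnimodal {X : Type*} (μ : X → X → X → X) (R : Pref X) : Prop :=
  ∃ t, R.IsTop t ∧ ∀ y z, z ∈ medInterval μ t y → z ≠ t → ¬ R.strict y z

/-- A rich domain of locally unimodal preorders: for all `x,y` it contains a preorder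
with top `x` whose upper contour set at `y` is exactly the interval `I^μ(x,y)`. -/
def RichDomain {X : Type*} (μ : X → X → X → X) (D : Set (Pref X)) : Prop :=
  (∀ R ∈ D, LocallyUnimodal μ R) ∧
  ∀ x y : X, ∃ R ∈ D, R.IsTop x ∧ {z | R.rel z y} = medInterval μ x y

/-- Strategy-proofness of an aggregation rule on profiles drawn from the domain `D`:
no agent `i` whose true preference lies in `D` (with top `tops i`) can strictly gain
by reporting `y` instead of her top. -/
def StrategyProofOn {X N : Type*} [DecidableEq N]
    (f : (N → X) → X) (D : Set (Pref X)) : Prop :=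
  ∀ prefs : N → Pref X, (∀ i, prefs i ∈ D) →
    ∀ tops : N → X, (∀ j, (prefs j).IsTop (tops j)) →
      ∀ (i : N) (y : X),
        ¬ (prefs i).strict (f (Function.update tops i y)) (f tops)

/-- `B_μ`-monotonicity: `f(x_N)` always lies in the median interval between `x_i` and
the outcome obtained when `i` deviates to `y`. -/
def BMuMonotonic {X N : Type*} [DecidableEq N]
    (μ : X → X → X → X) (f : (N → X) → X) : Prop :=
  ∀ (x : N → X) (i : N) (y : X),
    f x ∈ medInterval μ (x i) (f (Function.update x i y))

/-- `m` is meet-irreducible: whenever `m` is the greatest lower bound of a set `Y`,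
`m` itself belongs to `Y`. -/
def MeetIrred {X : Type*} [Preorder X] (m : X) : Prop :=
  ∀ Y : Set X, IsGLB Y m → m ∈ Y

/-- `j` is join-irreducible: whenever `j` is the least upper bound of a set `Y`,
`j` itself belongs to `Y`. -/
def JoinIrred {X : Type*} [Preorder X] (j : X) : Prop :=
  ∀ Y : Set X, IsLUB Y j → j ∈ Y

/-- Monotonic `M_X`-independence of an aggregation rule. -/
def MonotonicMIndependent {X N : Type*} [Preorder X] (f : (N → X) → X) : Prop :=
  ∀ (x y : N → X) (m : X), MeetIrred m →
    {i | x i ≤ m} ⊆ {i | y i ≤ m} → f x ≤ m → f y ≤ m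

/-- Upper distributivity: every principal order filter `↑u` is a distributive lattice,
expressed by the identity `x ⊔ (y ⊓ z) = (x ⊔ y) ⊓ (x ⊔ z)` for elements above a
common lower bound `u` (meets expressed via `IsGLB`). -/
def UpperDistributive (X : Type*) [SemilatticeSup X] : Prop :=
  ∀ u x y z m₁ m₂ : X, u ≤ x → u ≤ y → u ≤ z →
    IsGLB {y, z} m₁ → IsGLB {x ⊔ y, x ⊔ z} m₂ → x ⊔ m₁ = m₂

/-- Co-coronation (meet-Helly): if the three pairwise meets of `x,y,z` exist then the
meet of `{x,y,z}` exists. -/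
def MeetHelly (X : Type*) [SemilatticeSup X] : Prop :=
  ∀ x y z : X, (∃ a, IsGLB {x, y} a) → (∃ b, IsGLB {y, z} b) →
    (∃ c, IsGLB {x, z} c) → ∃ d, IsGLB ({x, y, z} : Set X) d

/-- `μ` is the median operation: `μ(x,y,z)` is the meet of `x⊔y`, `y⊔z`, `x⊔z`. -/
def IsMedianFn {X : Type*} [SemilatticeSup X] (μ : X → X → X → X) : Prop :=
  ∀ x y z : X, IsGLB {x ⊔ y, y ⊔ z, x ⊔ z} (μ x y z)

/-- Anonymity: invariance of the rule under permutations of the agents. -/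
def Anonymous {X N : Type*} (f : (N → X) → X) : Prop :=
  ∀ (x : N → X) (σ : Equiv.Perm N), f (x ∘ σ) = f x

/-- Bi-idempotence: if every agent proposes one of the two outcomes `y, z`, the rule
selects one of `y, z`. -/
def BiIdempotent {X N : Type*} (f : (N → X) → X) : Prop :=
  ∀ (x : N → X) (y z : X), (∀ i, x i = y ∨ x i = z) → f x = y ∨ f x = z

/-- The co-majority rule: `f(x_N)` is the meet over all majority coalitions `S`
(of size at least `⌊(|N|+2)/2⌋`) of the joins `⋁_{i ∈ S} x_i`. -/
def IsCoMajority {X N : Type*} [SemilatticeSup X] [Fintype N] (f : (N → X) → X) : Prop :=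
  ∀ x : N → X,
    IsGLB {z | ∃ S : Finset N, (Fintype.card N + 2) / 2 ≤ S.card ∧ IsLUB (x '' ↑S) z} (f x)

/-- An order filter of the poset of coalitions `(P(N), ⊆)`. -/
def OrderFilterN {N : Type*} (F : Set (Set N)) : Prop :=
  ∀ S T : Set N, S ∈ F → S ⊆ T → T ∈ F

/-- The locally `m`-winning coalitions of the rule `f`. -/
def winningCoalitions {X N : Type*} [Preorder X] (f : (N → X) → X) (m : X) : Set (Set N) :=
  {T | ∃ x : N → X, {i | x i ≤ m} = T ∧ f x ≤ m}

/-- Shortest-path distance in the covering graph of a partial order. -/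
noncomputable def covDist {X : Type*} [PartialOrder X] (x y : X) : ℕ :=
  sInf {n | ∃ p : ℕ → X, p 0 = x ∧ p n = y ∧ ∀ k < n, p k ⋖ p (k + 1) ∨ p (k + 1) ⋖ p k}

/-- The collection `B_A` of binary relations on `A` satisfying the predicate `P`
(e.g. all reflexive relations, or all irreflexive relations). -/
def RelSub (A : Type*) (P : (A → A → Prop) → Prop) : Type _ :=
  {R : A → A → Prop // P R}

/-- The predicate `P` is closed under pointwise union and intersection of relations
(as are reflexivity and irreflexivity). -/
class RelClosed (A : Type*) (P : (A → A → Prop) → Prop) : Prop where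
  or_closed : ∀ R S : A → A → Prop, P R → P S → P (fun a b => R a b ∨ S a b)
  and_closed : ∀ R S : A → A → Prop, P R → P S → P (fun a b => R a b ∧ S a b)

instance (A : Type*) : RelClosed A (@Reflexive A) where
  or_closed _ _ hR _ := fun a => Or.inl (hR a)
  and_closed _ _ hR hS := fun a => ⟨hR a, hS a⟩

instance (A : Type*) : RelClosed A (@Irreflexive A) where
  or_closed _ _ hR hS := fun a h => h.elim (hR a) (hS a)
  and_closed _ _ hR _ := fun a h => hR a h.1

namespace RelSub

variable {A : Type*} {P : (A → A → Prop) → Prop}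

/-- Relations in `B_A` are ordered by set inclusion. -/
instance : PartialOrder (RelSub A P) where
  le R S := ∀ a b, R.1 a b → S.1 a b
  le_refl R := fun _ _ h => h
  le_trans R S T h₁ h₂ := fun a b h => h₂ a b (h₁ a b h)
  le_antisymm R S h₁ h₂ :=
    Subtype.ext (funext fun a => funext fun b => propext ⟨h₁ a b, h₂ a b⟩)

/-- The lattice median `μ'(R₁,R₂,R₃) = (R₁∪R₂) ∩ (R₂∪R₃) ∩ (R₃∪R₁)`. -/
def median [RelClosed A P] (R₁ R₂ R₃ : RelSub A P) : RelSub A P :=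
  ⟨fun a b => (R₁.1 a b ∨ R₂.1 a b) ∧ (R₂.1 a b ∨ R₃.1 a b) ∧ (R₃.1 a b ∨ R₁.1 a b),
    RelClosed.and_closed _ _ (RelClosed.or_closed _ _ R₁.2 R₂.2)
      (RelClosed.and_closed _ _ (RelClosed.or_closed _ _ R₂.2 R₃.2)
        (RelClosed.or_closed _ _ R₃.2 R₁.2))⟩

end RelSub

/-- Monotonic `J_X`-independence (the dual of monotonic `M_X`-independence). -/
def MonotonicJIndependent {X N : Type*} [Preorder X] (f : (N → X) → X) : Prop :=
  ∀ (x y : N → X) (j : X), JoinIrred j →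
    {i | j ≤ x i} ⊆ {i | j ≤ y i} → j ≤ f x → j ≤ f y

/-- Monotonic independence of irrelevant alternatives for relation-valued rules. -/
def MonotonicIIA {A N : Type*} {P : (A → A → Prop) → Prop}
    (f : (N → RelSub A P) → RelSub A P) : Prop :=
  ∀ (R R' : N → RelSub A P) (u v : A),
    {i | (R i).1 u v} ⊆ {i | (R' i).1 u v} → (f R).1 u v → (f R').1 u v

/-- The Kemeny distance between two relations: the number of ordered pairs in their
symmetric difference. -/
noncomputable def kemenyDist {A : Type*} {P : (A → A → Prop) → Prop}
    (R S : RelSub A P) : ℕ :=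
  Set.ncard {p : A × A |
    (R.1 p.1 p.2 ∧ ¬ S.1 p.1 p.2) ∨ (S.1 p.1 p.2 ∧ ¬ R.1 p.1 p.2)}
section Aux

open scoped Classical

variable {A : Type*} {P : (A → A → Prop) → Prop} [RelClosed A P]

lemma relsub_ext_iff {R S : RelSub A P} : R = S ↔ ∀ a b, R.1 a b ↔ S.1 a b :=
  ⟨fun h a b => h ▸ Iff.rfl,
   fun h => Subtype.ext (funext fun a => funext fun b => propext (h a b))⟩

lemma mem_medInterval_iff {x y z : RelSub A P} :
    z ∈ medInterval (RelSub.median (P := P)) x y ↔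
      ∀ a b, (x.1 a b ∧ y.1 a b → z.1 a b) ∧ (z.1 a b → x.1 a b ∨ y.1 a b) := by
  simp only [medInterval, Set.mem_setOf_eq, relsub_ext_iff]
  simp only [RelSub.median]
  constructor
  · intro h a b; have := h a b; tauto
  · intro h a b; have := h a b; tauto

lemma left_mem_medInterval (x y : RelSub A P) :
    x ∈ medInterval (RelSub.median (P := P)) x y :=
  mem_medInterval_iff.2 fun _ _ => by tauto

lemma right_mem_medInterval (x y : RelSub A P) :
    y ∈ medInterval (RelSub.median (P := P)) x y :=
  mem_medInterval_iff.2 fun _ _ => by tauto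

lemma medInterval_self (x : RelSub A P) :
    medInterval (RelSub.median (P := P)) x x = {x} := by
  ext z
  rw [Set.mem_singleton_iff, mem_medInterval_iff, relsub_ext_iff]
  constructor
  · intro h a b; have := h a b; tauto
  · intro h a b; have := h a b; tauto

lemma medInterval_trans {x q y z : RelSub A P}
    (h1 : z ∈ medInterval (RelSub.median (P := P)) x y)
    (h2 : y ∈ medInterval (RelSub.median (P := P)) x q) :
    z ∈ medInterval (RelSub.median (P := P)) x q := by
  rw [mem_medInterval_iff] at *
  intro a b
  have := h1 a b; have := h2 a b; tauto

section WithHP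
variable [Nonempty A] (hP : P = @Reflexive A ∨ P = @Irreflexive A)
include hP

lemma diag_det (R S : RelSub A P) (a : A) : R.1 a a ↔ S.1 a a := by
  rcases hP with h | h
  · subst h; exact ⟨fun _ => S.2 a, fun _ => R.2 a⟩
  · subst h; exact ⟨fun h' => absurd h' (R.2 a), fun h' => absurd h' (S.2 a)⟩

lemma P_of_diag {S : A → A → Prop} (R : RelSub A P) (h : ∀ a, S a a ↔ R.1 a a) :
    P S := by
  rcases hP with h' | h'
  · subst h'; exact fun a => (h a).2 (R.2 a)
  · subst h'; exact fun a hs => R.2 a ((h a).1 hs)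

def topL : RelSub A P :=
  ⟨fun a b => a ≠ b ∨ P (@Eq A), by
    rcases hP with h | h
    · subst h; exact fun a => Or.inr fun x => rfl
    · subst h; rintro a (h | h)
      · exact h rfl
      · exact h (Classical.arbitrary A) rfl⟩

def botL : RelSub A P :=
  ⟨fun a b => a = b ∧ P (@Eq A), by
    rcases hP with h | h
    · subst h; exact fun a => ⟨rfl, fun x => rfl⟩
    · subst h; rintro a ⟨_, h⟩; exact h (Classical.arbitrary A) rfl⟩

lemma topL_apply_ne {a b : A} (hab : a ≠ b) : (topL hP).1 a b := Or.inl hab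

lemma botL_apply_ne {a b : A} (hab : a ≠ b) : ¬ (botL hP).1 a b := fun h => hab h.1

lemma le_topL (R : RelSub A P) : R ≤ topL hP := by
  intro a b h
  by_cases hab : a = b
  · subst hab; exact (diag_det hP R (topL hP) a).1 h
  · exact Or.inl hab

lemma botL_le (R : RelSub A P) : botL hP ≤ R := by
  rintro a b ⟨rfl, hp⟩
  exact (diag_det hP (botL hP) R a).1 ⟨rfl, hp⟩

def coatomL {a b : A} (hab : a ≠ b) : RelSub A P :=
  ⟨fun u v => (topL hP).1 u v ∧ ¬(u = a ∧ v = b),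
   P_of_diag hP (topL hP) fun u =>
     ⟨fun h => h.1, fun h => ⟨h, fun he => hab (he.1 ▸ he.2 ▸ rfl)⟩⟩⟩

def atomL {a b : A} (hab : a ≠ b) : RelSub A P :=
  ⟨fun u v => (botL hP).1 u v ∨ (u = a ∧ v = b),
   P_of_diag hP (botL hP) fun u =>
     ⟨fun h => h.elim id (fun he => absurd (he.1 ▸ he.2 ▸ rfl) hab), Or.inl⟩⟩

lemma le_coatomL_iff {a b : A} (hab : a ≠ b) {R : RelSub A P} :
    R ≤ coatomL hP hab ↔ ¬ R.1 a b := by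
  constructor
  · intro h hR
    exact (h a b hR).2 ⟨rfl, rfl⟩
  · intro h u v hR
    refine ⟨le_topL hP R u v hR, ?_⟩
    rintro ⟨rfl, rfl⟩
    exact h hR

lemma atomL_le_iff {a b : A} (hab : a ≠ b) {R : RelSub A P} :
    atomL hP hab ≤ R ↔ R.1 a b := by
  constructor
  · intro h; exact h a b (Or.inr ⟨rfl, rfl⟩)
  · rintro h u v (hb | ⟨rfl, rfl⟩)
    · exact botL_le hP R u v hb
    · exact h

lemma eq_of_coatomL_le {a b : A} (hab : a ≠ b) {z : RelSub A P}
    (h : coatomL hP hab ≤ z) : z = coatomL hP hab ∨ z = topL hP := by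
  by_cases hz : z.1 a b
  · right
    rw [relsub_ext_iff]
    intro u v
    refine ⟨fun h' => le_topL hP z u v h', fun h' => ?_⟩
    by_cases h'' : u = a ∧ v = b
    · obtain ⟨rfl, rfl⟩ := h''; exact hz
    · exact h u v ⟨h', h''⟩
  · left
    rw [relsub_ext_iff]
    intro u v
    refine ⟨fun h' => ⟨le_topL hP z u v h', ?_⟩, fun h' => h u v h'⟩
    rintro ⟨rfl, rfl⟩
    exact hz h'

lemma eq_of_le_atomL {a b : A} (hab : a ≠ b) {z : RelSub A P}
    (h : z ≤ atomL hP hab) : z = atomL hP hab ∨ z = botL hP := by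
  by_cases hz : z.1 a b
  · left
    rw [relsub_ext_iff]
    intro u v
    refine ⟨fun h' => h u v h', ?_⟩
    rintro (hb | ⟨rfl, rfl⟩)
    · exact botL_le hP z u v hb
    · exact hz
  · right
    rw [relsub_ext_iff]
    intro u v
    refine ⟨fun h' => ?_, fun h' => botL_le hP z u v h'⟩
    rcases h u v h' with hb | ⟨rfl, rfl⟩
    · exact hb
    · exact absurd h' hz

lemma meetIrred_coatomL {a b : A} (hab : a ≠ b) : MeetIrred (coatomL hP hab) := by
  intro Y hY
  by_contra hm
  have hlb : topL hP ∈ lowerBounds Y := by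
    intro y hy
    rcases eq_of_coatomL_le hP hab (hY.1 hy) with h | h
    · exact absurd (h ▸ hy) hm
    · exact h ▸ le_refl _
  exact (hY.2 hlb a b (topL_apply_ne hP hab)).2 ⟨rfl, rfl⟩

lemma joinIrred_atomL {a b : A} (hab : a ≠ b) : JoinIrred (atomL hP hab) := by
  intro Y hY
  by_contra hm
  have hub : botL hP ∈ upperBounds Y := by
    intro y hy
    rcases eq_of_le_atomL hP hab (hY.1 hy) with h | h
    · exact absurd (h ▸ hy) hm
    · exact h ▸ le_refl _
  exact botL_apply_ne hP hab (hY.2 hub a b (Or.inr ⟨rfl, rfl⟩))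

lemma meetIrred_eq_coatomL {m : RelSub A P} (hm : MeetIrred m) :
    ∃ (a b : A) (hab : a ≠ b), m = coatomL hP hab := by
  have hglb : IsGLB {z | ∃ (a b : A) (hab : a ≠ b), ¬ m.1 a b ∧ z = coatomL hP hab} m := by
    constructor
    · rintro z ⟨a, b, hab, hmab, rfl⟩
      exact (le_coatomL_iff hP hab).2 hmab
    · intro z hz a' b' hz'
      by_contra hmab
      have hab : a' ≠ b' := by
        rintro rfl
        exact hmab ((diag_det hP z m a').1 hz')
      exact (hz ⟨a', b', hab, hmab, rfl⟩ a' b' hz').2 ⟨rfl, rfl⟩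
  obtain ⟨a, b, hab, _, h⟩ := hm _ hglb
  exact ⟨a, b, hab, h⟩

lemma joinIrred_eq_atomL {j : RelSub A P} (hj : JoinIrred j) :
    ∃ (a b : A) (hab : a ≠ b), j = atomL hP hab := by
  have hlub : IsLUB {z | ∃ (a b : A) (hab : a ≠ b), j.1 a b ∧ z = atomL hP hab} j := by
    constructor
    · rintro z ⟨a, b, hab, hjab, rfl⟩
      exact (atomL_le_iff hP hab).2 hjab
    · intro z hz a' b' hj'
      by_cases hab : a' = b'
      · subst hab; exact (diag_det hP j z a').1 hj'
      · exact hz ⟨a', b', hab, hj', rfl⟩ a' b' (Or.inr ⟨rfl, rfl⟩)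
  obtain ⟨a, b, hab, _, h⟩ := hj _ hlub
  exact ⟨a, b, hab, h⟩

end WithHP

noncomputable def rnk (p q z : RelSub A P) : ℕ :=
  if z = p then 2 else if z ∈ medInterval (RelSub.median (P := P)) p q then 1 else 0

lemma rnk_self (p q : RelSub A P) : rnk p q p = 2 := if_pos rfl

lemma rnk_le_two (p q z : RelSub A P) : rnk p q z ≤ 2 := by
  unfold rnk; split_ifs <;> omega

lemma two_le_rnk_iff {p q z : RelSub A P} : 2 ≤ rnk p q z ↔ z = p := by
  constructor
  · intro h2
    by_contra hne
    unfold rnk at h2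
    rw [if_neg hne] at h2
    split_ifs at h2 <;> omega
  · rintro rfl; rw [rnk_self]

lemma one_le_rnk_iff {p q z : RelSub A P} :
    1 ≤ rnk p q z ↔ z ∈ medInterval (RelSub.median (P := P)) p q := by
  unfold rnk
  split_ifs with h h'
  · subst h; simp [left_mem_medInterval]
  · simp [h']
  · simp [h']

noncomputable def prefOf (p q : RelSub A P) : Pref (RelSub A P) where
  rel u v := rnk p q v ≤ rnk p q u
  refl _ := le_refl _
  trans _ _ _ h1 h2 := le_trans h2 h1

lemma prefOf_isTop (p q : RelSub A P) : (prefOf p q).IsTop p := by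
  constructor
  · intro v
    show rnk p q v ≤ rnk p q p
    rw [rnk_self]; exact rnk_le_two p q v
  · intro t' h
    have := h p
    rw [show (prefOf p q).rel t' p ↔ rnk p q p ≤ rnk p q t' from Iff.rfl, rnk_self] at this
    exact two_le_rnk_iff.1 this

lemma prefOf_strict_iff (p q u v : RelSub A P) :
    (prefOf p q).strict u v ↔ rnk p q v < rnk p q u := by
  rw [Pref.strict]
  exact lt_iff_le_not_ge.symm

lemma prefOf_unimodal (p q : RelSub A P) :
    LocallyUnimodal (RelSub.median (P := P)) (prefOf p q) := by
  refine ⟨p, prefOf_isTop p q, fun y z hz hzp => ?_⟩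
  rw [prefOf_strict_iff, not_lt]
  by_cases hy : y = p
  · subst hy
    rw [medInterval_self, Set.mem_singleton_iff] at hz
    exact absurd hz hzp
  by_cases hyI : y ∈ medInterval (RelSub.median (P := P)) p q
  · have h1 : rnk p q y = 1 := by unfold rnk; rw [if_neg hy, if_pos hyI]
    rw [h1]
    exact one_le_rnk_iff.2 (medInterval_trans hz hyI)
  · have h0 : rnk p q y = 0 := by unfold rnk; rw [if_neg hy, if_neg hyI]
    rw [h0]; exact Nat.zero_le _

lemma prefOf_contour (x y : RelSub A P) :
    {z | (prefOf x y).rel z y} = medInterval (RelSub.median (P := P)) x y := by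
  ext z
  show rnk x y y ≤ rnk x y z ↔ _
  by_cases hy : y = x
  · subst hy
    rw [rnk_self, medInterval_self, Set.mem_singleton_iff]
    exact two_le_rnk_iff
  · have h1 : rnk x y y = 1 := by
      unfold rnk; rw [if_neg hy, if_pos (right_mem_medInterval x y)]
    rw [h1]
    exact one_le_rnk_iff

end Aux

/-- **Proposition 4.** For `B_A` the (bounded distributive lattice of) reflexive — or
irreflexive — binary relations on a nonempty finite set `A` with median `μ'`, an
aggregation rule `f : B_A^N → B_A` satisfies the following equivalent conditions:
strategy-proofness on every rich locally unimodal domain, `B_{μ'}`-monotonicity,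
monotonic `M`-independence, monotonic `J`-independence, monotonic IIA, and the two
order-filter representations
`f(R_N) = ⋂_{S∈𝓕}((⋃_{i∈S}R_i) ∪ R_S)` and `f(R_N) = ⋃_{S∈𝓕}((⋂_{i∈S}R_i) ∩ R_S)`. -/
theorem relRules_strategyProof_tfae
    (A : Type*) [Fintype A] [Nonempty A]
    (P : (A → A → Prop) → Prop) [RelClosed A P]
    (hP : P = @Reflexive A ∨ P = @Irreflexive A)
    {N : Type*} [Fintype N] [DecidableEq N]
    (f : (N → RelSub A P) → RelSub A P) :
    List.TFAE
      [∀ D : Set (Pref (RelSub A P)),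
          RichDomain (RelSub.median (P := P)) D → StrategyProofOn f D,
        BMuMonotonic (RelSub.median (P := P)) f,
        MonotonicMIndependent f,
        MonotonicJIndependent f,
        MonotonicIIA f,
        ∃ (F : Set (Set N)) (Rs : Set N → RelSub A P), OrderFilterN F ∧
          ∀ (R : N → RelSub A P) (a b : A),
            (f R).1 a b ↔ ∀ S ∈ F, (∃ i ∈ S, (R i).1 a b) ∨ (Rs S).1 a b,
        ∃ (F : Set (Set N)) (Rs : Set N → RelSub A P), OrderFilterN F ∧
          ∀ (R : N → RelSub A P) (a b : A),
            (f R).1 a b ↔ ∃ S ∈ F, (∀ i ∈ S, (R i).1 a b) ∧ (Rs S).1 a b] := by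
  classical
  tfae_have 2 → 1 := by
    intro hB D hD prefs hprefs tops htops i y
    obtain ⟨t, htt, huni⟩ := hD.1 _ (hprefs i)
    have hti : tops i = t := htt.2 _ (htops i).1
    have hmem := hB tops i y
    rw [hti] at hmem
    by_cases hz : f tops = t
    · intro hstr
      exact hstr.2 (hz ▸ htt.1 _)
    · exact huni _ _ hmem hz
  tfae_have 1 → 2 := by
    intro hSP x i y
    by_contra hmem
    have hrich : RichDomain (RelSub.median (P := P))
        (Set.range fun pq : RelSub A P × RelSub A P => prefOf pq.1 pq.2) := by
      constructor
      · rintro R ⟨⟨p, q⟩, rfl⟩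
        exact prefOf_unimodal p q
      · intro p q
        exact ⟨prefOf p q, ⟨(p, q), rfl⟩, prefOf_isTop p q, prefOf_contour p q⟩
    set w := f (Function.update x i y) with hw
    have hSP' := hSP _ hrich
      (fun j => prefOf (x j) (if j = i then w else x j))
      (fun j => ⟨(x j, if j = i then w else x j), rfl⟩)
      x (fun j => prefOf_isTop _ _) i y
    apply hSP'
    have hieq : (if i = i then w else x i) = w := if_pos rfl
    rw [hieq, prefOf_strict_iff, ← hw]
    have h0 : rnk (x i) w (f x) = 0 := by
      unfold rnk
      rw [if_neg, if_neg hmem]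
      intro h
      exact hmem (h ▸ left_mem_medInterval (x i) w)
    have h1 : 1 ≤ rnk (x i) w w := one_le_rnk_iff.2 (right_mem_medInterval (x i) w)
    omega
  tfae_have 2 → 5 := by
    intro hB
    have step : ∀ (x : N → RelSub A P) (i : N) (z : RelSub A P) (u v : A),
        ((x i).1 u v → z.1 u v) → (f x).1 u v → (f (Function.update x i z)).1 u v := by
      intro x i z u v himp hf
      have h1 := (mem_medInterval_iff.1 (hB x i z) u v).2 hf
      rcases h1 with hxi | hfx'
      · have hz : z.1 u v := himp hxi
        have h2 := hB (Function.update x i z) i (x i)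
        rw [Function.update_idem, Function.update_eq_self] at h2
        have := (mem_medInterval_iff.1 h2 u v).1
        rw [Function.update_self] at this
        exact this ⟨hz, hf⟩
      · exact hfx'
    intro R R' u v hsub hf
    have key : ∀ s : Finset N, (f (fun j => if j ∈ s then R' j else R j)).1 u v := by
      intro s
      induction s using Finset.induction_on with
      | empty => simpa using hf
      | @insert j s hj ih =>
        have heq : (fun k => if k ∈ insert j s then R' k else R k)
            = Function.update (fun k => if k ∈ s then R' k else R k) j (R' j) := by
          funext k
          by_cases hk : k = j
          · subst hk; simp
          · simp [Function.update, hk, Finset.mem_insert]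
        rw [heq]
        refine step _ j (R' j) u v ?_ ih
        intro h
        rw [if_neg hj] at h
        exact hsub h
    have := key Finset.univ
    simpa using this
  tfae_have 5 → 6 := by
    intro hIIA
    refine ⟨Set.univ, fun S => f (fun i => if i ∈ S then botL hP else topL hP),
      fun _ _ _ _ => trivial, ?_⟩
    intro R a b
    by_cases hab : a = b
    · subst hab
      constructor
      · intro hf S _
        exact Or.inr ((diag_det hP (f R) _ a).1 hf)
      · intro hall
        rcases hall ∅ trivial with ⟨i, hi, _⟩ | hRs
        · exact absurd hi (Set.notMem_empty i)
        · exact (diag_det hP _ (f R) a).1 hRs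
    · constructor
      · intro hf S _
        by_cases hex : ∃ i ∈ S, (R i).1 a b
        · exact Or.inl hex
        · right
          refine hIIA R _ a b ?_ hf
          intro i hi
          have hiS : i ∉ S := fun hS => hex ⟨i, hS, hi⟩
          show (if i ∈ S then botL hP else topL hP).1 a b
          rw [if_neg hiS]
          exact topL_apply_ne hP hab
      · intro hall
        rcases hall {i | ¬ (R i).1 a b} trivial with ⟨i, hi, hR⟩ | hRs
        · exact absurd hR hi
        · refine hIIA _ R a b ?_ hRs
          intro i hi
          simp only [Set.mem_setOf_eq] at hi ⊢
          by_cases hiS : (R i).1 a b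
          · exact hiS
          · rw [if_pos hiS] at hi
            exact absurd hi (botL_apply_ne hP hab)
  tfae_have 6 → 2 := by
    rintro ⟨F, Rs, hF, hrep⟩ x i y
    rw [mem_medInterval_iff]
    intro a b
    constructor
    · rintro ⟨hxi, hfx'⟩
      rw [hrep] at hfx' ⊢
      intro S hS
      rcases hfx' S hS with ⟨j, hj, hj'⟩ | h
      · left
        by_cases hji : j = i
        · exact ⟨i, hji ▸ hj, hxi⟩
        · exact ⟨j, hj, by rwa [Function.update_of_ne hji] at hj'⟩
      · exact Or.inr h
    · intro hfx
      by_cases hxi : (x i).1 a b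
      · exact Or.inl hxi
      · right
        rw [hrep] at hfx ⊢
        intro S hS
        rcases hfx S hS with ⟨j, hj, hj'⟩ | h
        · left
          have hji : j ≠ i := fun h => hxi (h ▸ hj')
          exact ⟨j, hj, by rw [Function.update_of_ne hji]; exact hj'⟩
        · exact Or.inr h
  tfae_have 5 → 7 := by
    intro hIIA
    refine ⟨Set.univ, fun S => f (fun i => if i ∈ S then topL hP else botL hP),
      fun _ _ _ _ => trivial, ?_⟩
    intro R a b
    by_cases hab : a = b
    · subst hab
      constructor
      · intro hf
        exact ⟨∅, trivial, fun i hi => absurd hi (Set.notMem_empty i),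
          (diag_det hP (f R) _ a).1 hf⟩
      · rintro ⟨S, _, _, hRs⟩
        exact (diag_det hP _ (f R) a).1 hRs
    · constructor
      · intro hf
        refine ⟨{i | (R i).1 a b}, trivial, fun i hi => hi, ?_⟩
        refine hIIA R _ a b ?_ hf
        intro i hi
        show (if i ∈ {j | (R j).1 a b} then topL hP else botL hP).1 a b
        rw [if_pos hi]
        exact topL_apply_ne hP hab
      · rintro ⟨S, _, hall, hRs⟩
        refine hIIA _ R a b ?_ hRs
        intro i hi
        simp only [Set.mem_setOf_eq] at hi ⊢
        by_cases hiS : i ∈ S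
        · exact hall i hiS
        · rw [if_neg hiS] at hi
          exact absurd hi (botL_apply_ne hP hab)
  tfae_have 7 → 5 := by
    rintro ⟨F, Rs, hF, hrep⟩ R R' u v hsub hf
    rw [hrep] at hf ⊢
    obtain ⟨S, hS, hall, hRs⟩ := hf
    exact ⟨S, hS, fun i hi => hsub (hall i hi), hRs⟩
  tfae_have 5 → 3 := by
    intro hIIA x y m hm hsub hfx
    obtain ⟨a, b, hab, rfl⟩ := meetIrred_eq_coatomL hP hm
    rw [le_coatomL_iff] at hfx ⊢
    intro hfy
    refine hfx (hIIA y x a b ?_ hfy)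
    intro i hi
    by_contra hxi
    exact (le_coatomL_iff hP hab).1 (hsub ((le_coatomL_iff hP hab).2 hxi)) hi
  tfae_have 3 → 5 := by
    intro hM R R' u v hsub hf
    by_cases huv : u = v
    · subst huv
      exact (diag_det hP (f R) (f R') u).1 hf
    · by_contra hf'
      have h1 : f R' ≤ coatomL hP huv := (le_coatomL_iff hP huv).2 hf'
      have h2 := hM R' R _ (meetIrred_coatomL hP huv) ?_ h1
      · exact (le_coatomL_iff hP huv).1 h2 hf
      · intro i hi
        rw [Set.mem_setOf_eq, le_coatomL_iff hP huv] at hi ⊢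
        exact fun h => hi (hsub h)
  tfae_have 5 → 4 := by
    intro hIIA x y j hj hsub hjx
    obtain ⟨a, b, hab, rfl⟩ := joinIrred_eq_atomL hP hj
    rw [atomL_le_iff] at hjx ⊢
    refine hIIA x y a b ?_ hjx
    intro i hi
    exact (atomL_le_iff hP hab).1 (hsub ((atomL_le_iff hP hab).2 hi))
  tfae_have 4 → 5 := by
    intro hJ R R' u v hsub hf
    by_cases huv : u = v
    · subst huv
      exact (diag_det hP (f R) (f R') u).1 hf
    · refine (atomL_le_iff hP huv).1
        (hJ R R' (atomL hP huv) (joinIrred_atomL hP huv) ?_ ((atomL_le_iff hP huv).2 hf))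
      intro i hi
      exact (atomL_le_iff hP huv).2 (hsub ((atomL_le_iff hP huv).1 hi))
  tfae_finish
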